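/- Let σ < 0, δ < 0 with σ² + 4δ > 0, let A = [[σ, δ], [1, 0]], and let r₁ = (σ + √(σ² + 4δ))/2. Fix ρ ≥ 0 and let R₁ = {(x, y) ∈ Σ_ρ⁺ \ Σ_ρ : x > r₁·y}. Then for every q ∈ R₁: (i) exp(t·A)·q → (0,0) as t → +∞; and (ii) there exists t¹ < 0 such that exp(t¹·A)·q ∈ Σ_ρ. -/

import Mathlib

open Matrix Filter
open scoped Nat

theorem exp_mulVec_eigen (M : Matrix (Fin 2) (Fin 2) ℝ) (v : Fin 2 → ℝ) (r : ℝ)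
    (hv : M.mulVec v = r • v) :
    (NormedSpace.exp M).mulVec v = Real.exp r • v := by
  letI : SeminormedRing (Matrix (Fin 2) (Fin 2) ℝ) := Matrix.linftyOpSemiNormedRing
  letI : NormedRing (Matrix (Fin 2) (Fin 2) ℝ) := Matrix.linftyOpNormedRing
  letI : NormedAlgebra ℝ (Matrix (Fin 2) (Fin 2) ℝ) := Matrix.linftyOpNormedAlgebra
  have hpow : ∀ n : ℕ, (M ^ n).mulVec v = r ^ n • v := by
    intro n
    induction n with
    | zero => simp [Matrix.one_mulVec]
    | succ n ih =>
      rw [pow_succ, ← Matrix.mulVec_mulVec, hv, Matrix.mulVec_smul, ih, smul_smul, pow_succ,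
        mul_comm]
  let L : Matrix (Fin 2) (Fin 2) ℝ →L[ℝ] (Fin 2 → ℝ) :=
    LinearMap.toContinuousLinearMap
      { toFun := fun N => N.mulVec v
        map_add' := fun M N => Matrix.add_mulVec M N v
        map_smul' := fun c M => Matrix.smul_mulVec c M v }
  have hL : ∀ N : Matrix (Fin 2) (Fin 2) ℝ, L N = N.mulVec v := fun _ => rfl
  have hsum : Summable fun n : ℕ => (n !⁻¹ : ℝ) • M ^ n :=
    NormedSpace.expSeries_summable' (𝕂 := ℝ) M
  have hsum2 : Summable fun n : ℕ => (n !⁻¹ : ℝ) * r ^ n := by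
    simpa [smul_eq_mul] using NormedSpace.expSeries_summable' (𝕂 := ℝ) r
  calc (NormedSpace.exp M).mulVec v
      = L (∑' n : ℕ, (n !⁻¹ : ℝ) • M ^ n) := by rw [NormedSpace.exp_eq_tsum (𝕂 := ℝ), hL]
    _ = ∑' n : ℕ, L ((n !⁻¹ : ℝ) • M ^ n) := L.map_tsum hsum
    _ = ∑' n : ℕ, ((n !⁻¹ : ℝ) * r ^ n) • v := by
        refine tsum_congr fun n => ?_
        rw [_root_.map_smul, hL, hpow, smul_smul]
    _ = (∑' n : ℕ, (n !⁻¹ : ℝ) * r ^ n) • v := hsum2.tsum_smul_const v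
    _ = Real.exp r • v := by
        congr 1
        rw [Real.exp_eq_exp_ℝ, NormedSpace.exp_eq_tsum (𝕂 := ℝ)]
        simp [smul_eq_mul]

theorem stmt_5 (σ δ ρ : ℝ) (hσ : σ < 0) (hδ : δ < 0) (hdisc : 0 < σ ^ 2 + 4 * δ)
    (hρ : 0 ≤ ρ)
    (A : Matrix (Fin 2) (Fin 2) ℝ) (hA : A = !![σ, δ; 1, 0])
    (r₁ : ℝ) (hr₁ : r₁ = (σ + Real.sqrt (σ ^ 2 + 4 * δ)) / 2)
    (h : (Fin 2 → ℝ) → ℝ)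
    (hh : ∀ p : Fin 2 → ℝ, h p = if p 0 ≤ 0 then p 1 else p 1 - ρ * p 0)
    (Sig SigPlus R₁ : Set (Fin 2 → ℝ))
    (hSig : Sig = {p | h p = 0}) (hSigPlus : SigPlus = {p | 0 ≤ h p})
    (hR₁ : R₁ = {p ∈ SigPlus \ Sig | p 0 > r₁ * p 1}) :
    ∀ q ∈ R₁,
      Filter.Tendsto (fun t : ℝ => (NormedSpace.exp (t • A)).mulVec q) Filter.atTop (nhds 0)
      ∧ ∃ t₁ : ℝ, t₁ < 0 ∧ (NormedSpace.exp (t₁ • A)).mulVec q ∈ Sig := by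
  subst hA hSig hSigPlus hR₁
  have hclosed : ∀ p : Fin 2 → ℝ, h p = p 1 - ρ * max (p 0) 0 := by
    intro p
    rw [hh]
    rcases le_or_gt (p 0) 0 with h0 | h0
    · rw [if_pos h0, max_eq_right h0]; ring
    · rw [if_neg (not_le.mpr h0), max_eq_left h0.le]
  set s := Real.sqrt (σ ^ 2 + 4 * δ) with hs
  have hs0 : 0 < s := Real.sqrt_pos.mpr hdisc
  have hs2 : s ^ 2 = σ ^ 2 + 4 * δ := Real.sq_sqrt hdisc.le
  have hsσ : s < -σ := by nlinarith
  set r2 := (σ - s) / 2 with hr2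
  have hr1neg : r₁ < 0 := by rw [hr₁]; linarith
  have hr2neg : r2 < 0 := by rw [hr2]; linarith
  have hr21 : r2 < r₁ := by rw [hr₁, hr2]; linarith
  have hdiff : r₁ - r2 = s := by rw [hr₁, hr2]; ring
  have he1 : r₁ ^ 2 = σ * r₁ + δ := by rw [hr₁]; field_simp; nlinarith
  have he2 : r2 ^ 2 = σ * r2 + δ := by rw [hr2]; field_simp; nlinarith
  have hev : ∀ r : ℝ, r ^ 2 = σ * r + δ →
      (!![σ, δ; 1, 0]).mulVec ![r, 1] = r • ![r, 1] := by
    intro r hr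
    funext i
    fin_cases i <;>
      simp [Matrix.mulVec, dotProduct, Fin.sum_univ_two] <;> nlinarith
  have key : ∀ (t r : ℝ) (v : Fin 2 → ℝ), (!![σ, δ; 1, 0]).mulVec v = r • v →
      (NormedSpace.exp (t • !![σ, δ; 1, 0])).mulVec v = Real.exp (t * r) • v := by
    intro t r v hv
    apply exp_mulVec_eigen
    rw [Matrix.smul_mulVec, hv, smul_smul]
  intro q hq
  obtain ⟨⟨hq1, hq2⟩, hq3⟩ := hq
  have hqpos : 0 < h q := lt_of_le_of_ne hq1 (Ne.symm hq2)
  set a := (q 0 - r2 * q 1) / s with ha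
  set b := (r₁ * q 1 - q 0) / s with hb
  have hbneg : b < 0 := div_neg_of_neg_of_pos (by linarith [hq3]) hs0
  have hsne : s ≠ 0 := ne_of_gt hs0
  have hcomp0 : a * r₁ + b * r2 = q 0 := by
    rw [ha, hb]
    field_simp
    linear_combination q 0 * hdiff
  have hcomp1 : a + b = q 1 := by
    rw [ha, hb]
    field_simp
    linear_combination q 1 * hdiff
  have hq_decomp : q = a • ![r₁, 1] + b • ![r2, 1] := by
    funext i
    fin_cases i <;> simp [smul_eq_mul] <;> linarith [hcomp0, hcomp1]
  have hflow : ∀ t : ℝ, (NormedSpace.exp (t • !![σ, δ; 1, 0])).mulVec q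
      = (a * Real.exp (t * r₁)) • ![r₁, 1] + (b * Real.exp (t * r2)) • ![r2, 1] := by
    intro t
    conv_lhs => rw [hq_decomp]
    rw [Matrix.mulVec_add, Matrix.mulVec_smul, Matrix.mulVec_smul,
      key t r₁ _ (hev r₁ he1), key t r2 _ (hev r2 he2), smul_smul, smul_smul]
  have hflow0 : ∀ t : ℝ, (NormedSpace.exp (t • !![σ, δ; 1, 0])).mulVec q 0
      = a * Real.exp (t * r₁) * r₁ + b * Real.exp (t * r2) * r2 := by
    intro t; rw [hflow]; simp [smul_eq_mul]
  have hflow1 : ∀ t : ℝ, (NormedSpace.exp (t • !![σ, δ; 1, 0])).mulVec q 1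
      = a * Real.exp (t * r₁) + b * Real.exp (t * r2) := by
    intro t; rw [hflow]; simp [smul_eq_mul]
  have hexp_tendsto : ∀ r : ℝ, r < 0 →
      Tendsto (fun t : ℝ => Real.exp (t * r)) atTop (nhds 0) := by
    intro r hr
    rw [Real.tendsto_exp_comp_nhds_zero]
    exact Tendsto.atTop_mul_const_of_neg hr tendsto_id
  constructor
  · rw [tendsto_pi_nhds]
    intro i
    fin_cases i
    · have : Tendsto (fun t : ℝ => a * Real.exp (t * r₁) * r₁ + b * Real.exp (t * r2) * r2)
          atTop (nhds (a * 0 * r₁ + b * 0 * r2)) :=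
        (((hexp_tendsto r₁ hr1neg).const_mul a).mul_const r₁).add
          (((hexp_tendsto r2 hr2neg).const_mul b).mul_const r2)
      simp only [Pi.zero_apply]
      refine Tendsto.congr (fun t => (hflow0 t).symm) ?_
      simpa using this
    · have : Tendsto (fun t : ℝ => a * Real.exp (t * r₁) + b * Real.exp (t * r2))
          atTop (nhds (a * 0 + b * 0)) :=
        ((hexp_tendsto r₁ hr1neg).const_mul a).add ((hexp_tendsto r2 hr2neg).const_mul b)
      simp only [Pi.zero_apply]
      refine Tendsto.congr (fun t => (hflow1 t).symm) ?_
      simpa using this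
  · -- part (ii)
    have htendb : Tendsto (fun t : ℝ => a * Real.exp (t * s)) atBot (nhds 0) := by
      have h1 : Tendsto (fun t : ℝ => t * s) atBot atBot :=
        Tendsto.atBot_mul_const hs0 tendsto_id
      have h2 : Tendsto (fun t : ℝ => Real.exp (t * s)) atBot (nhds 0) :=
        Real.tendsto_exp_atBot.comp h1
      simpa using h2.const_mul a
    have hevent : ∀ᶠ t in atBot, a * Real.exp (t * s) < -b :=
      htendb.eventually_lt_const (by linarith)
    obtain ⟨t₀, ht₀lt, ht₀neg⟩ := (hevent.and (eventually_lt_atBot (0 : ℝ))).exists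
    set g : ℝ → ℝ := fun t => (a * Real.exp (t * r₁) + b * Real.exp (t * r2))
      - ρ * max (a * Real.exp (t * r₁) * r₁ + b * Real.exp (t * r2) * r2) 0 with hg
    have hgc : Continuous g := by
      apply Continuous.sub
      · fun_prop
      · exact continuous_const.mul (Continuous.max (by fun_prop) continuous_const)
    have hyneg : a * Real.exp (t₀ * r₁) + b * Real.exp (t₀ * r2) < 0 := by
      have hsplit : Real.exp (t₀ * r₁) = Real.exp (t₀ * r2) * Real.exp (t₀ * s) := by
        rw [← Real.exp_add]
        congr 1
        rw [hr₁, hr2]; ring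
      rw [hsplit]
      nlinarith [Real.exp_pos (t₀ * r2), Real.exp_pos (t₀ * s)]
    have hgt₀ : g t₀ < 0 := by
      have : 0 ≤ ρ * max (a * Real.exp (t₀ * r₁) * r₁ + b * Real.exp (t₀ * r2) * r2) 0 :=
        mul_nonneg hρ (le_max_right _ _)
      rw [hg]; dsimp only; linarith
    have hg0 : g 0 = h q := by
      rw [hg, hclosed q]
      simp only [zero_mul, Real.exp_zero, mul_one]
      rw [hcomp0, hcomp1]
    have hg0pos : 0 < g 0 := by rw [hg0]; exact hqpos
    have hivt := intermediate_value_Icc ht₀neg.le hgc.continuousOn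
    obtain ⟨t₁, ht₁mem, ht₁eq⟩ := hivt ⟨hgt₀.le, hg0pos.le⟩
    refine ⟨t₁, ?_, ?_⟩
    · rcases lt_or_eq_of_le ht₁mem.2 with hlt | heq
      · exact hlt
      · exfalso; rw [heq] at ht₁eq; linarith
    · show h _ = 0
      rw [hclosed, hflow0, hflow1]
      exact ht₁eq
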